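/- Let 1 \leq K \leq N and M \geq 1 be integers and L \geq 0 a real number. Let W_1,\dots,W_M, Q, and A_\theta^{(i)} (for \theta \in [M], i \in [N]) be random variables; for \Lambda \subseteq [M] write W_\Lambda = (W_j)_{j\in\Lambda}. Assume: (i) H(A_\theta^\Gamma | W_\Lambda, Q) = H(A_{\theta'}^\Gamma | W_\Lambda, Q) for all \theta, \theta' \in [M], all \Lambda \subseteq [M], and all \Gamma \subseteq [N] with |\Gamma| = K; (ii) H(W_\theta | A_\theta^{[N]}, W_\Lambda, Q) = 0 for all \theta \in [M] and all \Lambda \subseteq [M]; (iii) H(W_\theta | W_\Lambda, Q) = L for all \Lambda \subseteq [M] and all \theta \in [M] \setminus \Lambda; (iv) H(A_\theta^{[N]} | W_{[M]}, Q) = 0 for all \theta \in [M]. Then for every \theta \in [M], \sum_{i=1}^{N} H(A_\theta^{(i)}) \geq L \cdot \sum_{i=0}^{M-1} (K/N)^i; in particular, when L > 0, the PIR rate L / \sum_{i=1}^{N} H(A_\theta^{(i)}) is at most (1 + K/N + (K/N)^2 + \dots + (K/N)^{M-1})^{-1}. -/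

import Mathlib

/-- Shannon entropy (natural logarithm) of a finitely-valued random variable `X`
on a finite probability space with probability mass function `μ`. -/
noncomputable def entropy {Ω V : Type*} [Fintype Ω] [Fintype V] [DecidableEq V]
    (μ : Ω → ℝ) (X : Ω → V) : ℝ :=
  ∑ v : V, Real.negMulLog (∑ ω ∈ Finset.univ.filter (fun ω => X ω = v), μ ω)

/-- Conditional Shannon entropy `H(X | Y) = H(X, Y) - H(Y)`. -/
noncomputable def condEntropy {Ω V U : Type*} [Fintype Ω] [Fintype V] [Fintype U]
    [DecidableEq V] [DecidableEq U] (μ : Ω → ℝ) (X : Ω → V) (Y : Ω → U) : ℝ :=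
  entropy μ (fun ω => (X ω, Y ω)) - entropy μ Y

/-- The joint random variable `(A i)_{i ∈ Γ}` of the subfamily of `(A i)_{i ∈ [N]}`
indexed by the subset `Γ`. -/
def jointOn {Ω V : Type*} {N : ℕ} (Γ : Finset (Fin N)) (A : Fin N → Ω → V) :
    Ω → (Fin N → Option V) :=
  fun ω i => if i ∈ Γ then some (A i ω) else none

namespace PIRAux

open Finset Real

variable {Ω : Type*} [Fintype Ω] {μ : Ω → ℝ}

/-- superadditivity of negMulLog on nonnegative families -/
lemma negMulLog_sum_le {V : Type*} (s : Finset V) (a : V → ℝ) (ha : ∀ v ∈ s, 0 ≤ a v) :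
    Real.negMulLog (∑ v ∈ s, a v) ≤ ∑ v ∈ s, Real.negMulLog (a v) := by
  classical
  set S := ∑ v ∈ s, a v with hS
  have hS0 : 0 ≤ S := Finset.sum_nonneg ha
  have h1 : Real.negMulLog S = ∑ v ∈ s, (-(a v) * Real.log S) := by
    rw [Real.negMulLog, ← Finset.sum_neg_distrib, ← Finset.sum_mul]
  rw [h1]
  apply Finset.sum_le_sum
  intro v hv
  rcases eq_or_lt_of_le (ha v hv) with h0 | h0
  · simp [← h0, Real.negMulLog]
  · have hle : a v ≤ S := Finset.single_le_sum ha hv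
    have := Real.log_le_log h0 hle
    rw [Real.negMulLog]
    nlinarith [ha v hv]

lemma entropy_eq_sum_image {W : Type*} [Fintype W] [DecidableEq W] (Z : Ω → W) :
    entropy μ Z = ∑ w ∈ Finset.image Z Finset.univ,
      Real.negMulLog (∑ ω ∈ Finset.univ.filter (fun ω => Z ω = w), μ ω) := by
  classical
  rw [entropy]
  refine (Finset.sum_subset (Finset.subset_univ _) ?_).symm
  intro w _ hw
  have : Finset.univ.filter (fun ω => Z ω = w) = ∅ := by
    rw [Finset.filter_eq_empty_iff]
    intro ω _ hω
    exact hw (Finset.mem_image.mpr ⟨ω, Finset.mem_univ ω, hω⟩)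
  simp [this]

/-- entropy depends only on the fibers of the random variable -/
lemma entropy_congr {V U : Type*} [Fintype V] [Fintype U] [DecidableEq V] [DecidableEq U]
    {X : Ω → V} {Y : Ω → U} (h : ∀ ω ω', X ω = X ω' ↔ Y ω = Y ω') :
    entropy μ X = entropy μ Y := by
  classical
  rcases isEmpty_or_nonempty Ω with hΩ | hΩ
  · simp [entropy, Finset.univ_eq_empty]
  · set F : V → U := fun v => if h : ∃ ω, X ω = v then Y h.choose else Y (Classical.arbitrary Ω)
      with hFdef
    have hF : ∀ ω, F (X ω) = Y ω := by
      intro ω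
      have hex : ∃ ω', X ω' = X ω := ⟨ω, rfl⟩
      simp only [hFdef, dif_pos hex]
      exact (h _ _).mp hex.choose_spec
    rw [entropy_eq_sum_image (μ := μ) X, entropy_eq_sum_image (μ := μ) Y]
    refine Finset.sum_bij (fun v _ => F v) ?_ ?_ ?_ ?_
    · intro v hv
      obtain ⟨ω, _, rfl⟩ := Finset.mem_image.mp hv
      beta_reduce
      rw [hF]
      exact Finset.mem_image.mpr ⟨ω, Finset.mem_univ _, rfl⟩
    · intro v₁ hv₁ v₂ hv₂ heq
      obtain ⟨ω₁, _, rfl⟩ := Finset.mem_image.mp hv₁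
      obtain ⟨ω₂, _, rfl⟩ := Finset.mem_image.mp hv₂
      beta_reduce at heq
      rw [hF, hF] at heq
      exact (h _ _).mpr heq
    · intro u hu
      obtain ⟨ω, _, rfl⟩ := Finset.mem_image.mp hu
      exact ⟨X ω, Finset.mem_image.mpr ⟨ω, Finset.mem_univ _, rfl⟩, hF ω⟩
    · intro v hv
      obtain ⟨ω₁, _, rfl⟩ := Finset.mem_image.mp hv
      congr 1
      apply Finset.sum_congr _ (fun _ _ => rfl)
      apply Finset.filter_congr
      intro ω _
      beta_reduce
      rw [hF]
      exact h ω ω₁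

lemma pm_nonneg (hμ : ∀ ω, 0 ≤ μ ω) {V : Type*} [DecidableEq V] {X : Ω → V} (v : V) :
    0 ≤ ∑ ω ∈ Finset.univ.filter (fun ω => X ω = v), μ ω :=
  Finset.sum_nonneg (fun ω _ => hμ ω)

lemma pm_le_one (hμ : ∀ ω, 0 ≤ μ ω) (hμ1 : ∑ ω, μ ω = 1)
    {V : Type*} [DecidableEq V] {X : Ω → V} (v : V) :
    ∑ ω ∈ Finset.univ.filter (fun ω => X ω = v), μ ω ≤ 1 := by
  rw [← hμ1]
  exact Finset.sum_le_sum_of_subset_of_nonneg (Finset.filter_subset _ _) (fun ω _ _ => hμ ω)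

lemma entropy_nonneg (hμ : ∀ ω, 0 ≤ μ ω) (hμ1 : ∑ ω, μ ω = 1)
    {V : Type*} [Fintype V] [DecidableEq V] (X : Ω → V) : 0 ≤ entropy μ X := by
  refine Finset.sum_nonneg (fun v _ => Real.negMulLog_nonneg (pm_nonneg hμ v) ?_)
  exact pm_le_one hμ hμ1 v

/-- marginalization: summing fiber masses of `Y` inside a fiber event `P` -/
lemma pm_marg {U : Type*} [Fintype U] [DecidableEq U] (P : Ω → Prop) [DecidablePred P]
    (Y : Ω → U) :
    ∑ u : U, ∑ ω ∈ Finset.univ.filter (fun ω => P ω ∧ Y ω = u), μ ω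
      = ∑ ω ∈ Finset.univ.filter P, μ ω := by
  classical
  rw [← Finset.sum_fiberwise (Finset.univ.filter P) Y μ]
  congr 1
  ext u
  rw [Finset.filter_filter]

lemma entropy_pair_eq {V U : Type*} [Fintype V] [Fintype U] [DecidableEq V] [DecidableEq U]
    (X : Ω → V) (Y : Ω → U) :
    entropy μ (fun ω => (X ω, Y ω)) =
      ∑ v : V, ∑ u : U,
        Real.negMulLog (∑ ω ∈ Finset.univ.filter (fun ω => X ω = v ∧ Y ω = u), μ ω) := by
  classical
  rw [entropy, Fintype.sum_prod_type]
  refine Finset.sum_congr rfl (fun v _ => Finset.sum_congr rfl (fun u _ => ?_))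
  congr 1
  apply Finset.sum_congr _ (fun _ _ => rfl)
  apply Finset.filter_congr
  intro ω _
  simp [Prod.ext_iff]

lemma entropy_pair_ge_snd (hμ : ∀ ω, 0 ≤ μ ω)
    {V U : Type*} [Fintype V] [Fintype U] [DecidableEq V] [DecidableEq U]
    (X : Ω → V) (Y : Ω → U) :
    entropy μ Y ≤ entropy μ (fun ω => (X ω, Y ω)) := by
  classical
  rw [entropy_pair_eq, Finset.sum_comm, entropy]
  refine Finset.sum_le_sum (fun u _ => ?_)
  have h1 : ∑ ω ∈ Finset.univ.filter (fun ω => Y ω = u), μ ω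
      = ∑ v : V, ∑ ω ∈ Finset.univ.filter (fun ω => Y ω = u ∧ X ω = v), μ ω :=
    (pm_marg (fun ω => Y ω = u) X).symm
  have h2 : ∀ v : V, (Finset.univ.filter (fun ω => X ω = v ∧ Y ω = u))
      = (Finset.univ.filter (fun ω => Y ω = u ∧ X ω = v)) := by
    intro v; apply Finset.filter_congr; intro ω _; constructor <;> exact fun h => ⟨h.2, h.1⟩
  calc Real.negMulLog (∑ ω ∈ Finset.univ.filter (fun ω => Y ω = u), μ ω)
      = Real.negMulLog (∑ v : V, ∑ ω ∈ Finset.univ.filter (fun ω => Y ω = u ∧ X ω = v), μ ω) := by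
        rw [h1]
    _ ≤ ∑ v : V, Real.negMulLog (∑ ω ∈ Finset.univ.filter (fun ω => Y ω = u ∧ X ω = v), μ ω) :=
        negMulLog_sum_le _ _ (fun v _ => Finset.sum_nonneg fun ω _ => hμ ω)
    _ = ∑ v : V, Real.negMulLog (∑ ω ∈ Finset.univ.filter (fun ω => X ω = v ∧ Y ω = u), μ ω) := by
        refine Finset.sum_congr rfl (fun v _ => ?_); rw [h2 v]

lemma condEntropy_nonneg (hμ : ∀ ω, 0 ≤ μ ω)
    {V U : Type*} [Fintype V] [Fintype U] [DecidableEq V] [DecidableEq U]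
    (X : Ω → V) (Y : Ω → U) : 0 ≤ condEntropy μ X Y :=
  sub_nonneg.mpr (entropy_pair_ge_snd hμ X Y)

lemma entropy_comp_le (hμ : ∀ ω, 0 ≤ μ ω)
    {V V' : Type*} [Fintype V] [Fintype V'] [DecidableEq V] [DecidableEq V']
    (X : Ω → V) (g : V → V') :
    entropy μ (fun ω => g (X ω)) ≤ entropy μ X := by
  have h1 : entropy μ X = entropy μ (fun ω => (X ω, g (X ω))) := by
    apply entropy_congr
    intro ω ω'
    constructor
    · intro h; rw [Prod.ext_iff]; exact ⟨h, by rw [h]⟩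
    · intro h; exact (Prod.ext_iff.mp h).1
  rw [h1]
  exact entropy_pair_ge_snd hμ X (fun ω => g (X ω))

lemma entropy_const (hμ1 : ∑ ω, μ ω = 1)
    {U : Type*} [Fintype U] [DecidableEq U] (u0 : U) :
    entropy μ (fun _ => u0) = 0 := by
  classical
  rw [entropy]
  apply Finset.sum_eq_zero
  intro u _
  by_cases h : u0 = u
  · subst h
    simp [Finset.filter_true_of_mem, hμ1]
  · rw [Finset.filter_false_of_mem (fun ω _ => h), Finset.sum_empty, Real.negMulLog_zero]

/-- chain rule -/
lemma condEntropy_chain {V U T : Type*} [Fintype V] [Fintype U] [Fintype T]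
    [DecidableEq V] [DecidableEq U] [DecidableEq T]
    (X : Ω → V) (Y : Ω → U) (Z : Ω → T) :
    condEntropy μ (fun ω => (X ω, Y ω)) Z
      = condEntropy μ X (fun ω => (Y ω, Z ω)) + condEntropy μ Y Z := by
  have h : entropy μ (fun ω => ((X ω, Y ω), Z ω)) = entropy μ (fun ω => (X ω, (Y ω, Z ω))) := by
    apply entropy_congr; intro ω ω'; simp only [Prod.ext_iff]; tauto
  simp only [condEntropy]
  rw [h]
  ring
lemma triple_swap_t {V U T : Type*} [Fintype V] [Fintype U] [Fintype T] (f : V → U → T → ℝ) :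
    ∑ v : V, ∑ u : U, ∑ t : T, f v u t = ∑ t : T, ∑ v : V, ∑ u : U, f v u t :=
  calc ∑ v : V, ∑ u : U, ∑ t : T, f v u t
      = ∑ v : V, ∑ t : T, ∑ u : U, f v u t :=
        Finset.sum_congr rfl (fun v _ => Finset.sum_comm)
    _ = ∑ t : T, ∑ v : V, ∑ u : U, f v u t := Finset.sum_comm

lemma triple_swap_u {V U T : Type*} [Fintype V] [Fintype U] [Fintype T] (f : V → U → T → ℝ) :
    ∑ v : V, ∑ u : U, ∑ t : T, f v u t = ∑ u : U, ∑ t : T, ∑ v : V, f v u t :=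
  calc ∑ v : V, ∑ u : U, ∑ t : T, f v u t
      = ∑ u : U, ∑ v : V, ∑ t : T, f v u t := Finset.sum_comm
    _ = ∑ u : U, ∑ t : T, ∑ v : V, f v u t :=
        Finset.sum_congr rfl (fun u _ => Finset.sum_comm)

/-- numeric core of submodularity of entropy -/
lemma submod_core {V U T : Type*} [Fintype V] [Fintype U] [Fintype T]
    (a : V → U → T → ℝ) (ha : ∀ v u t, 0 ≤ a v u t) :
    (∑ v : V, ∑ u : U, ∑ t : T, Real.negMulLog (a v u t))
      + ∑ t : T, Real.negMulLog (∑ v : V, ∑ u : U, a v u t)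
    ≤ (∑ v : V, ∑ t : T, Real.negMulLog (∑ u : U, a v u t))
      + ∑ u : U, ∑ t : T, Real.negMulLog (∑ v : V, a v u t) := by
  classical
  set b : V → T → ℝ := fun v t => ∑ u : U, a v u t with hb
  set c : U → T → ℝ := fun u t => ∑ v : V, a v u t with hc
  set d : T → ℝ := fun t => ∑ v : V, ∑ u : U, a v u t with hd
  have hb0 : ∀ v t, 0 ≤ b v t := fun v t => Finset.sum_nonneg fun u _ => ha v u t
  have hc0 : ∀ u t, 0 ≤ c u t := fun u t => Finset.sum_nonneg fun v _ => ha v u t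
  have hd0 : ∀ t, 0 ≤ d t := fun t => Finset.sum_nonneg fun v _ => hb0 v t
  have hab : ∀ v u t, a v u t ≤ b v t := fun v u t =>
    Finset.single_le_sum (fun u _ => ha v u t) (Finset.mem_univ u)
  have hac : ∀ v u t, a v u t ≤ c u t := fun v u t =>
    Finset.single_le_sum (fun v _ => ha v u t) (Finset.mem_univ v)
  have hbd : ∀ v t, b v t ≤ d t := fun v t =>
    Finset.single_le_sum (fun v _ => hb0 v t) (Finset.mem_univ v)
  have hbsum : ∀ t, ∑ v : V, b v t = d t := fun t => rfl
  have hcsum : ∀ t, ∑ u : U, c u t = d t := fun t => Finset.sum_comm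
  -- termwise inequality
  have key : ∀ v u t, a v u t - (if 0 < d t then b v t * c u t / d t else 0)
      ≤ a v u t * (Real.log (a v u t) + Real.log (d t)
          - Real.log (b v t) - Real.log (c u t)) := by
    intro v u t
    rcases eq_or_lt_of_le (ha v u t) with h0 | h0
    · rw [← h0]
      simp only [zero_mul, zero_sub, neg_nonpos]
      split
      · exact div_nonneg (mul_nonneg (hb0 v t) (hc0 u t)) (hd0 t)
      · exact le_refl 0
    · have hbp : 0 < b v t := lt_of_lt_of_le h0 (hab v u t)
      have hcp : 0 < c u t := lt_of_lt_of_le h0 (hac v u t)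
      have hdp : 0 < d t := lt_of_lt_of_le hbp (hbd v t)
      rw [if_pos hdp]
      have hx : (0:ℝ) < a v u t * d t / (b v t * c u t) := by positivity
      have hlog : 1 - (a v u t * d t / (b v t * c u t))⁻¹
          ≤ Real.log (a v u t * d t / (b v t * c u t)) :=
        Real.one_sub_inv_le_log_of_pos hx
      have hexp : Real.log (a v u t * d t / (b v t * c u t))
          = Real.log (a v u t) + Real.log (d t) - Real.log (b v t) - Real.log (c u t) := by
        rw [Real.log_div (by positivity) (by positivity),
            Real.log_mul (ne_of_gt h0) (ne_of_gt hdp),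
            Real.log_mul (ne_of_gt hbp) (ne_of_gt hcp)]
        ring
      rw [hexp, inv_div] at hlog
      have hmul := mul_le_mul_of_nonneg_left hlog (le_of_lt h0)
      have heq : a v u t * (1 - b v t * c u t / (a v u t * d t))
          = a v u t - b v t * c u t / d t := by
        field_simp
      calc a v u t - b v t * c u t / d t
          = a v u t * (1 - b v t * c u t / (a v u t * d t)) := heq.symm
        _ ≤ _ := hmul
  -- sum the termwise inequality
  have hsum : (∑ v : V, ∑ u : U, ∑ t : T, a v u t)
        - (∑ v : V, ∑ u : U, ∑ t : T, (if 0 < d t then b v t * c u t / d t else 0))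
      ≤ ∑ v : V, ∑ u : U, ∑ t : T, a v u t * (Real.log (a v u t) + Real.log (d t)
          - Real.log (b v t) - Real.log (c u t)) := by
    rw [← Finset.sum_sub_distrib]
    refine Finset.sum_le_sum (fun v _ => ?_)
    rw [← Finset.sum_sub_distrib]
    refine Finset.sum_le_sum (fun u _ => ?_)
    rw [← Finset.sum_sub_distrib]
    exact Finset.sum_le_sum (fun t _ => key v u t)
  have htot : ∑ v : V, ∑ u : U, ∑ t : T, a v u t = ∑ t : T, d t := triple_swap_t a
  have hquot : ∑ v : V, ∑ u : U, ∑ t : T, (if 0 < d t then b v t * c u t / d t else 0)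
      ≤ ∑ t : T, d t := by
    rw [triple_swap_t]
    refine Finset.sum_le_sum (fun t _ => ?_)
    by_cases hdt : 0 < d t
    · simp only [if_pos hdt]
      have hpull : ∑ v : V, ∑ u : U, b v t * c u t / d t
          = (∑ v : V, b v t) * (∑ u : U, c u t) / d t := by
        rw [Finset.sum_mul, Finset.sum_div]
        refine Finset.sum_congr rfl (fun v _ => ?_)
        rw [Finset.mul_sum, Finset.sum_div]
      rw [hpull, hbsum, hcsum, mul_div_assoc, div_self (ne_of_gt hdt), mul_one]
    · simp only [if_neg hdt, Finset.sum_const_zero]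
      exact hd0 t
  have hS : 0 ≤ ∑ v : V, ∑ u : U, ∑ t : T, a v u t * (Real.log (a v u t) + Real.log (d t)
      - Real.log (b v t) - Real.log (c u t)) := by
    refine le_trans ?_ hsum
    rw [htot]
    linarith [hquot]
  -- expand S into the four entropy sums
  have hsplit : ∑ v : V, ∑ u : U, ∑ t : T, a v u t * (Real.log (a v u t) + Real.log (d t)
        - Real.log (b v t) - Real.log (c u t))
      = (∑ v : V, ∑ u : U, ∑ t : T, a v u t * Real.log (a v u t))
        + (∑ v : V, ∑ u : U, ∑ t : T, a v u t * Real.log (d t))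
        - (∑ v : V, ∑ u : U, ∑ t : T, a v u t * Real.log (b v t))
        - (∑ v : V, ∑ u : U, ∑ t : T, a v u t * Real.log (c u t)) := by
    simp only [mul_add, mul_sub, Finset.sum_add_distrib, Finset.sum_sub_distrib]
  have E3 : ∑ v : V, ∑ u : U, ∑ t : T, Real.negMulLog (a v u t)
      = -∑ v : V, ∑ u : U, ∑ t : T, a v u t * Real.log (a v u t) := by
    simp only [Real.negMulLog, neg_mul, Finset.sum_neg_distrib]
  have E1 : ∑ v : V, ∑ t : T, Real.negMulLog (b v t)
      = -∑ v : V, ∑ u : U, ∑ t : T, a v u t * Real.log (b v t) := by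
    rw [← Finset.sum_neg_distrib]
    refine Finset.sum_congr rfl (fun v _ => ?_)
    rw [Finset.sum_comm, ← Finset.sum_neg_distrib]
    refine Finset.sum_congr rfl (fun t _ => ?_)
    have : ∑ u : U, a v u t * Real.log (b v t) = b v t * Real.log (b v t) := by
      rw [← Finset.sum_mul]
    rw [this, Real.negMulLog, neg_mul]
  have E2 : ∑ u : U, ∑ t : T, Real.negMulLog (c u t)
      = -∑ v : V, ∑ u : U, ∑ t : T, a v u t * Real.log (c u t) := by
    rw [triple_swap_u, ← Finset.sum_neg_distrib]
    refine Finset.sum_congr rfl (fun u _ => ?_)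
    rw [← Finset.sum_neg_distrib]
    refine Finset.sum_congr rfl (fun t _ => ?_)
    have : ∑ v : V, a v u t * Real.log (c u t) = c u t * Real.log (c u t) := by
      rw [← Finset.sum_mul]
    rw [this, Real.negMulLog, neg_mul]
  have E4 : ∑ t : T, Real.negMulLog (d t)
      = -∑ v : V, ∑ u : U, ∑ t : T, a v u t * Real.log (d t) := by
    rw [triple_swap_t, ← Finset.sum_neg_distrib]
    refine Finset.sum_congr rfl (fun t _ => ?_)
    have h1 : ∑ v : V, ∑ u : U, a v u t * Real.log (d t)
        = (∑ v : V, ∑ u : U, a v u t) * Real.log (d t) := by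
      rw [Finset.sum_mul]
      exact Finset.sum_congr rfl fun v _ => (Finset.sum_mul _ _ _).symm
    rw [h1, Real.negMulLog, neg_mul]
  rw [E1, E2, E3, E4]
  linarith [hS, hsplit]
lemma entropy_triple_eq {V U T : Type*} [Fintype V] [Fintype U] [Fintype T]
    [DecidableEq V] [DecidableEq U] [DecidableEq T] (X : Ω → V) (Y : Ω → U) (Z : Ω → T) :
    entropy μ (fun ω => (X ω, Y ω, Z ω)) =
      ∑ v : V, ∑ u : U, ∑ t : T,
        Real.negMulLog (∑ ω ∈ Finset.univ.filter (fun ω => X ω = v ∧ Y ω = u ∧ Z ω = t), μ ω) := by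
  classical
  rw [entropy, Fintype.sum_prod_type]
  refine Finset.sum_congr rfl (fun v _ => ?_)
  rw [Fintype.sum_prod_type]
  refine Finset.sum_congr rfl (fun u _ => Finset.sum_congr rfl (fun t _ => ?_))
  congr 1
  apply Finset.sum_congr _ (fun _ _ => rfl)
  apply Finset.filter_congr
  intro ω _
  simp [Prod.ext_iff]

lemma entropy_submod (hμ : ∀ ω, 0 ≤ μ ω)
    {V U T : Type*} [Fintype V] [Fintype U] [Fintype T]
    [DecidableEq V] [DecidableEq U] [DecidableEq T] (X : Ω → V) (Y : Ω → U) (Z : Ω → T) :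
    entropy μ (fun ω => (X ω, Y ω, Z ω)) + entropy μ Z
      ≤ entropy μ (fun ω => (X ω, Z ω)) + entropy μ (fun ω => (Y ω, Z ω)) := by
  classical
  set a : V → U → T → ℝ :=
    fun v u t => ∑ ω ∈ Finset.univ.filter (fun ω => X ω = v ∧ Y ω = u ∧ Z ω = t), μ ω with hadef
  have ha : ∀ v u t, 0 ≤ a v u t := fun v u t => Finset.sum_nonneg fun ω _ => hμ ω
  have margU : ∀ v t, (∑ u : U, a v u t)
      = ∑ ω ∈ Finset.univ.filter (fun ω => X ω = v ∧ Z ω = t), μ ω := by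
    intro v t
    rw [← pm_marg (fun ω => X ω = v ∧ Z ω = t) Y]
    refine Finset.sum_congr rfl (fun u _ => ?_)
    apply Finset.sum_congr _ (fun _ _ => rfl)
    apply Finset.filter_congr
    intro ω _
    tauto
  have margV : ∀ u t, (∑ v : V, a v u t)
      = ∑ ω ∈ Finset.univ.filter (fun ω => Y ω = u ∧ Z ω = t), μ ω := by
    intro u t
    rw [← pm_marg (fun ω => Y ω = u ∧ Z ω = t) X]
    refine Finset.sum_congr rfl (fun v _ => ?_)
    apply Finset.sum_congr _ (fun _ _ => rfl)
    apply Finset.filter_congr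
    intro ω _
    tauto
  have margVU : ∀ t, (∑ v : V, ∑ u : U, a v u t)
      = ∑ ω ∈ Finset.univ.filter (fun ω => Z ω = t), μ ω := by
    intro t
    rw [← pm_marg (fun ω => Z ω = t) X]
    refine Finset.sum_congr rfl (fun v _ => ?_)
    rw [margU]
    apply Finset.sum_congr _ (fun _ _ => rfl)
    apply Finset.filter_congr
    intro ω _
    tauto
  have hA : entropy μ (fun ω => (X ω, Y ω, Z ω))
      = ∑ v : V, ∑ u : U, ∑ t : T, Real.negMulLog (a v u t) := entropy_triple_eq X Y Z
  have hXZ : entropy μ (fun ω => (X ω, Z ω))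
      = ∑ v : V, ∑ t : T, Real.negMulLog (∑ u : U, a v u t) := by
    rw [entropy_pair_eq]
    exact Finset.sum_congr rfl fun v _ => Finset.sum_congr rfl fun t _ => by rw [margU]
  have hYZ : entropy μ (fun ω => (Y ω, Z ω))
      = ∑ u : U, ∑ t : T, Real.negMulLog (∑ v : V, a v u t) := by
    rw [entropy_pair_eq]
    exact Finset.sum_congr rfl fun u _ => Finset.sum_congr rfl fun t _ => by rw [margV]
  have hZ : entropy μ Z = ∑ t : T, Real.negMulLog (∑ v : V, ∑ u : U, a v u t) := by
    rw [entropy]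
    exact Finset.sum_congr rfl fun t _ => by rw [margVU]
  rw [hA, hXZ, hYZ, hZ]
  exact submod_core a ha

/-- conditioning on more reduces entropy -/
lemma condEntropy_cond_le (hμ : ∀ ω, 0 ≤ μ ω)
    {V U T : Type*} [Fintype V] [Fintype U] [Fintype T]
    [DecidableEq V] [DecidableEq U] [DecidableEq T] (X : Ω → V) (Y : Ω → U) (Z : Ω → T) :
    condEntropy μ X (fun ω => (Y ω, Z ω)) ≤ condEntropy μ X Z := by
  have h := entropy_submod hμ X Y Z
  have h1 : condEntropy μ X (fun ω => (Y ω, Z ω))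
      = entropy μ (fun ω => (X ω, Y ω, Z ω)) - entropy μ (fun ω => (Y ω, Z ω)) := rfl
  have h2 : condEntropy μ X Z
      = entropy μ (fun ω => (X ω, Z ω)) - entropy μ Z := rfl
  rw [h1, h2]
  linarith

lemma condEntropy_congr_right {V U U' : Type*} [Fintype V] [Fintype U] [Fintype U']
    [DecidableEq V] [DecidableEq U] [DecidableEq U'] {X : Ω → V} {Y : Ω → U} {Y' : Ω → U'}
    (h : ∀ ω ω', Y ω = Y ω' ↔ Y' ω = Y' ω') : condEntropy μ X Y = condEntropy μ X Y' := by
  unfold condEntropy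
  rw [entropy_congr h, entropy_congr (X := fun ω => (X ω, Y ω)) (Y := fun ω => (X ω, Y' ω))
    (fun ω ω' => by simp only [Prod.ext_iff]; exact and_congr Iff.rfl (h ω ω'))]

lemma condEntropy_congr_left {V V' U : Type*} [Fintype V] [Fintype U] [Fintype V']
    [DecidableEq V] [DecidableEq U] [DecidableEq V'] {X : Ω → V} {X' : Ω → V'} {Y : Ω → U}
    (h : ∀ ω ω', X ω = X ω' ↔ X' ω = X' ω') : condEntropy μ X Y = condEntropy μ X' Y := by
  unfold condEntropy
  rw [entropy_congr (X := fun ω => (X ω, Y ω)) (Y := fun ω => (X' ω, Y ω))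
    (fun ω ω' => by simp only [Prod.ext_iff]; exact and_congr (h ω ω') Iff.rfl)]

lemma condEntropy_comp_left_le (hμ : ∀ ω, 0 ≤ μ ω)
    {V V' U : Type*} [Fintype V] [Fintype U] [Fintype V']
    [DecidableEq V] [DecidableEq U] [DecidableEq V'] (X : Ω → V) (Y : Ω → U) (g : V → V') :
    condEntropy μ (fun ω => g (X ω)) Y ≤ condEntropy μ X Y := by
  unfold condEntropy
  apply sub_le_sub_right
  exact entropy_comp_le hμ (fun ω => (X ω, Y ω)) (fun p => (g p.1, p.2))

/-- conditioning on a function of `Y` (jointly with `C`) gives larger entropy -/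
lemma condEntropy_comp_right_ge (hμ : ∀ ω, 0 ≤ μ ω)
    {V U U' T : Type*} [Fintype V] [Fintype U] [Fintype U'] [Fintype T]
    [DecidableEq V] [DecidableEq U] [DecidableEq U'] [DecidableEq T]
    (X : Ω → V) (Y : Ω → U) (C : Ω → T) (g : U → U') :
    condEntropy μ X (fun ω => (Y ω, C ω)) ≤ condEntropy μ X (fun ω => (g (Y ω), C ω)) := by
  have h1 : condEntropy μ X (fun ω => (Y ω, C ω))
      = condEntropy μ X (fun ω => (Y ω, (g (Y ω), C ω))) := by
    apply condEntropy_congr_right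
    intro ω ω'
    simp only [Prod.ext_iff]
    constructor
    · rintro ⟨h1, h2⟩; exact ⟨h1, by rw [h1], h2⟩
    · rintro ⟨h1, _, h3⟩; exact ⟨h1, h3⟩
  rw [h1]
  exact condEntropy_cond_le hμ X Y (fun ω => (g (Y ω), C ω))

lemma condEntropy_comp_left_le₂ (hμ : ∀ ω, 0 ≤ μ ω)
    {V V' U : Type*} [Fintype V] [Fintype U] [Fintype V']
    [DecidableEq V] [DecidableEq U] [DecidableEq V'] (X : Ω → V) (Y : Ω → U) (g : V → V')
    (X' : Ω → V') (hX' : X' = fun ω => g (X ω)) :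
    condEntropy μ X' Y ≤ condEntropy μ X Y := by
  subst hX'
  exact condEntropy_comp_left_le hμ X Y g

lemma condEntropy_comp_right_ge₂ (hμ : ∀ ω, 0 ≤ μ ω)
    {V U U' T : Type*} [Fintype V] [Fintype U] [Fintype U'] [Fintype T]
    [DecidableEq V] [DecidableEq U] [DecidableEq U'] [DecidableEq T]
    (X : Ω → V) (Y : Ω → U) (C : Ω → T) (g : U → U') (Y' : Ω → U')
    (hY' : Y' = fun ω => g (Y ω)) :
    condEntropy μ X (fun ω => (Y ω, C ω)) ≤ condEntropy μ X (fun ω => (Y' ω, C ω)) := by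
  subst hY'
  exact condEntropy_comp_right_ge hμ X Y C g

lemma condEntropy_le_entropy (hμ : ∀ ω, 0 ≤ μ ω) (hμ1 : ∑ ω, μ ω = 1)
    {V U : Type*} [Fintype V] [Fintype U] [DecidableEq V] [DecidableEq U]
    (X : Ω → V) (Y : Ω → U) : condEntropy μ X Y ≤ entropy μ X := by
  have h := entropy_submod hμ X Y (fun _ => (0 : Fin 1))
  have hc : entropy μ (fun _ : Ω => (0 : Fin 1)) = 0 := entropy_const hμ1 0
  have h1 : entropy μ (fun ω => (X ω, Y ω, (0 : Fin 1)))
      = entropy μ (fun ω => (X ω, Y ω)) :=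
    entropy_congr (fun ω ω' => by simp [Prod.ext_iff])
  have h2 : entropy μ (fun ω => (X ω, (0 : Fin 1))) = entropy μ X :=
    entropy_congr (fun ω ω' => by simp [Prod.ext_iff])
  have h3 : entropy μ (fun ω => (Y ω, (0 : Fin 1))) = entropy μ Y :=
    entropy_congr (fun ω ω' => by simp [Prod.ext_iff])
  rw [h1, h2, h3, hc] at h
  unfold condEntropy
  linarith

lemma condEntropy_const (hμ1 : ∑ ω, μ ω = 1)
    {V U : Type*} [Fintype V] [Fintype U] [DecidableEq V] [DecidableEq U]
    (v0 : V) (Y : Ω → U) : condEntropy μ (fun _ => v0) Y = 0 := by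
  unfold condEntropy
  rw [entropy_congr (X := fun ω => (v0, Y ω)) (Y := Y)
    (fun ω ω' => by simp [Prod.ext_iff])]
  ring
section JointOn

variable {N : ℕ} {β : Type*} [Fintype β] [DecidableEq β]

lemma jointOn_insert_fiber (B : Fin N → Ω → β) (a : Fin N) (s : Finset (Fin N)) :
    ∀ ω ω', jointOn (insert a s) B ω = jointOn (insert a s) B ω'
      ↔ (B a ω, jointOn s B ω) = (B a ω', jointOn s B ω') := by
  intro ω ω'
  simp only [Prod.ext_iff]
  constructor
  · intro h
    constructor
    · have ha := congrFun h a
      simp only [jointOn, if_pos (Finset.mem_insert_self a s)] at ha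
      exact Option.some.inj ha
    · funext i
      simp only [jointOn]
      by_cases hi : i ∈ s
      · have hii := congrFun h i
        simp only [jointOn, if_pos (Finset.mem_insert_of_mem hi)] at hii
        rw [if_pos hi, if_pos hi]
        exact hii
      · rw [if_neg hi, if_neg hi]
  · rintro ⟨h1, h2⟩
    funext i
    simp only [jointOn]
    by_cases hia : i = a
    · subst hia
      rw [if_pos (Finset.mem_insert_self i s), if_pos (Finset.mem_insert_self i s)]
      exact congrArg some h1
    · by_cases his : i ∈ s
      · have := congrFun h2 i
        simp only [jointOn, if_pos his] at this
        rw [if_pos (Finset.mem_insert_of_mem his), if_pos (Finset.mem_insert_of_mem his)]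
        exact this
      · have hni : i ∉ insert a s := by simp [Finset.mem_insert, hia, his]
        rw [if_neg hni, if_neg hni]

lemma jointOn_comp_of_subset (B : Fin N → Ω → β) {s t : Finset (Fin N)} (hst : s ⊆ t) :
    jointOn s B = fun ω => (fun h i => if i ∈ s then h i else none) (jointOn t B ω) := by
  funext ω i
  simp only [jointOn]
  by_cases hi : i ∈ s
  · rw [if_pos hi, if_pos hi, if_pos (hst hi)]
  · rw [if_neg hi, if_neg hi]

variable {T : Type*} [Fintype T] [DecidableEq T]

lemma condEntropy_jointOn_mono (hμ : ∀ ω, 0 ≤ μ ω) (B : Fin N → Ω → β)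
    {s t : Finset (Fin N)} (hst : s ⊆ t) (C : Ω → T) :
    condEntropy μ (jointOn s B) C ≤ condEntropy μ (jointOn t B) C := by
  exact condEntropy_comp_left_le₂ hμ (jointOn t B) C
    (fun h i => if i ∈ s then h i else none) (jointOn s B) (jointOn_comp_of_subset B hst)

lemma condEntropy_jointOn_insert (B : Fin N → Ω → β) (a : Fin N) (s : Finset (Fin N))
    (C : Ω → T) :
    condEntropy μ (jointOn (insert a s) B) C
      = condEntropy μ (B a) (fun ω => (jointOn s B ω, C ω))
        + condEntropy μ (jointOn s B) C := by
  rw [condEntropy_congr_left (jointOn_insert_fiber B a s)]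
  exact condEntropy_chain (B a) (jointOn s B) C

/-- the prefix `{0, …, k-1}` of `Fin N` -/
def pref (N k : ℕ) : Finset (Fin N) := Finset.univ.filter (fun i => (i : ℕ) < k)

lemma pref_univ : pref N N = Finset.univ := by
  ext i; simp [pref, i.isLt]

lemma condEntropy_jointOn_prefix (hμ1 : ∑ ω, μ ω = 1) (B : Fin N → Ω → β) (C : Ω → T) :
    ∀ k, k ≤ N → condEntropy μ (jointOn (pref N k) B) C
      = ∑ i ∈ pref N k, condEntropy μ (B i) (fun ω => (jointOn (pref N (i : ℕ)) B ω, C ω)) := by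
  intro k
  induction k with
  | zero =>
    intro _
    have he : pref N 0 = (∅ : Finset (Fin N)) := by
      ext i; simp [pref]
    have hc : jointOn (∅ : Finset (Fin N)) B = fun _ => (fun _ => (none : Option β)) := by
      funext ω i; simp [jointOn]
    rw [he, Finset.sum_empty, hc]
    exact condEntropy_const hμ1 _ C
  | succ k ih =>
    intro hk
    have hkN : k < N := hk
    have hins : pref N (k + 1) = insert (⟨k, hkN⟩ : Fin N) (pref N k) := by
      ext i
      simp only [pref, Finset.mem_insert, Finset.mem_filter, Finset.mem_univ, true_and,
        Fin.ext_iff]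
      omega
    have hnot : (⟨k, hkN⟩ : Fin N) ∉ pref N k := by simp [pref]
    rw [hins, condEntropy_jointOn_insert, Finset.sum_insert hnot, ih (le_of_lt hkN)]

end JointOn
section Shearer

variable {N K : ℕ} {β : Type*} [Fintype β] [DecidableEq β]
variable {T : Type*} [Fintype T] [DecidableEq T]

/-- cyclic window of length `K` starting at `j` -/
def win [NeZero N] (hKN : K ≤ N) (j : Fin N) : Finset (Fin N) :=
  Finset.image (fun t : Fin K => j + Fin.castLE hKN t) Finset.univ

lemma card_win [NeZero N] (hKN : K ≤ N) (j : Fin N) : (win hKN j).card = K := by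
  rw [win, Finset.card_image_of_injective _
    (fun t₁ t₂ h => Fin.castLE_injective hKN (by exact add_left_cancel h)),
    Finset.card_univ, Fintype.card_fin]

lemma count_win [NeZero N] (hKN : K ≤ N) (i : Fin N) :
    (Finset.univ.filter (fun j => i ∈ win hKN j)).card = K := by
  have hset : Finset.univ.filter (fun j => i ∈ win hKN j)
      = Finset.image (fun t : Fin K => i - Fin.castLE hKN t) Finset.univ := by
    ext j
    simp only [Finset.mem_filter, Finset.mem_univ, true_and, win, Finset.mem_image]
    constructor
    · rintro ⟨t, ht⟩
      exact ⟨t, by rw [← ht]; abel⟩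
    · rintro ⟨t, ht⟩
      exact ⟨t, by rw [← ht]; abel⟩
  rw [hset, Finset.card_image_of_injective _
    (fun t₁ t₂ h => Fin.castLE_injective hKN (by exact sub_right_injective h)),
    Finset.card_univ, Fintype.card_fin]

/-- Shearer-type inequality for the cyclic windows -/
lemma shearer [NeZero N] (hμ : ∀ ω, 0 ≤ μ ω) (hμ1 : ∑ ω, μ ω = 1) (hKN : K ≤ N)
    (B : Fin N → Ω → β) (C : Ω → T) :
    (K : ℝ) * condEntropy μ (jointOn Finset.univ B) C
      ≤ ∑ j : Fin N, condEntropy μ (jointOn (win hKN j) B) C := by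
  set h : Fin N → ℝ :=
    fun i => condEntropy μ (B i) (fun ω => (jointOn (pref N (i : ℕ)) B ω, C ω)) with hh
  have huniv : condEntropy μ (jointOn Finset.univ B) C = ∑ i : Fin N, h i := by
    have h1 := condEntropy_jointOn_prefix hμ1 B C N le_rfl
    rw [pref_univ] at h1
    exact h1
  have hge : ∀ Γ : Finset (Fin N), ∑ i ∈ Γ, h i ≤ condEntropy μ (jointOn Γ B) C := by
    intro Γ
    induction Γ using Finset.induction_on_max with
    | empty => simpa using condEntropy_nonneg hμ (jointOn (∅ : Finset (Fin N)) B) C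
    | insert a s hlt ih =>
      have has : a ∉ s := fun h' => lt_irrefl a (hlt a h')
      rw [Finset.sum_insert has, condEntropy_jointOn_insert]
      have hsub : s ⊆ pref N (a : ℕ) := by
        intro x hx
        simp only [pref, Finset.mem_filter, Finset.mem_univ, true_and]
        exact hlt x hx
      have hmono : h a ≤ condEntropy μ (B a) (fun ω => (jointOn s B ω, C ω)) :=
        condEntropy_comp_right_ge₂ hμ (B a) (jointOn (pref N (a : ℕ)) B) C
          (fun f i => if i ∈ s then f i else none) (jointOn s B)
          (jointOn_comp_of_subset B hsub)
      linarith [ih]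
  calc (K : ℝ) * condEntropy μ (jointOn Finset.univ B) C
      = ∑ i : Fin N, (K : ℝ) * h i := by rw [huniv, Finset.mul_sum]
    _ = ∑ i : Fin N, ∑ j : Fin N, (if i ∈ win hKN j then h i else 0) := by
        refine Finset.sum_congr rfl fun i _ => ?_
        rw [← Finset.sum_filter, Finset.sum_const, count_win hKN i, nsmul_eq_mul]
    _ = ∑ j : Fin N, ∑ i : Fin N, (if i ∈ win hKN j then h i else 0) := Finset.sum_comm
    _ = ∑ j : Fin N, ∑ i ∈ win hKN j, h i := by
        refine Finset.sum_congr rfl fun j _ => ?_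
        rw [← Finset.sum_filter, Finset.filter_univ_mem]
    _ ≤ ∑ j : Fin N, condEntropy μ (jointOn (win hKN j) B) C :=
        Finset.sum_le_sum fun j _ => hge _

end Shearer
end PIRAux

/-- Converse part of the coded-PIR capacity theorem: the total download
`∑_i H(A_θ^{(i)})` is at least `L · ∑_{i=0}^{M-1} (K/N)^i`, so the PIR rate is at
most `(1 + K/N + ⋯ + (K/N)^{M-1})⁻¹`. -/
theorem coded_pir_capacity_converse
    {Ω α γ δ : Type*} [Fintype Ω] [Fintype α] [Fintype γ] [Fintype δ]
    [DecidableEq α] [DecidableEq γ] [DecidableEq δ]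
    (N K M : ℕ) (hK : 1 ≤ K) (hKN : K ≤ N) (hM : 1 ≤ M) (L : ℝ) (hL : 0 ≤ L)
    (μ : Ω → ℝ) (hμ : ∀ ω, 0 ≤ μ ω) (hμ1 : ∑ ω, μ ω = 1)
    (A : Fin M → Fin N → Ω → α) (W : Fin M → Ω → γ) (Q : Ω → δ)
    (hsym : ∀ θ θ' : Fin M, ∀ Λ : Finset (Fin M), ∀ Γ : Finset (Fin N), Γ.card = K →
      condEntropy μ (jointOn Γ (A θ)) (fun ω => (jointOn Λ W ω, Q ω)) =
        condEntropy μ (jointOn Γ (A θ')) (fun ω => (jointOn Λ W ω, Q ω)))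
    (hcorr : ∀ θ : Fin M, ∀ Λ : Finset (Fin M),
      condEntropy μ (W θ)
        (fun ω => (jointOn Finset.univ (A θ) ω, jointOn Λ W ω, Q ω)) = 0)
    (hrec : ∀ Λ : Finset (Fin M), ∀ θ : Fin M, θ ∉ Λ →
      condEntropy μ (W θ) (fun ω => (jointOn Λ W ω, Q ω)) = L)
    (hdet : ∀ θ : Fin M,
      condEntropy μ (jointOn Finset.univ (A θ))
        (fun ω => (jointOn Finset.univ W ω, Q ω)) = 0) :
    ∀ θ : Fin M,
      (∑ i : Fin N, entropy μ (A θ i) ≥ L * ∑ i ∈ Finset.range M, ((K : ℝ) / N) ^ i) ∧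
      (0 < L → L / ∑ i : Fin N, entropy μ (A θ i) ≤
        (∑ i ∈ Finset.range M, ((K : ℝ) / N) ^ i)⁻¹) := by
  classical
  intro θ
  haveI : NeZero N := ⟨by omega⟩
  have hN0 : (0 : ℝ) < N := by
    have : 0 < N := by omega
    exact_mod_cast this
  set x : ℝ := (K : ℝ) / N with hx
  have hx0 : 0 ≤ x := by positivity
  -- step identity from the chain rule, correctness and the recovery condition
  have hstep : ∀ (Λ : Finset (Fin M)) (τ : Fin M), τ ∉ Λ →
      condEntropy μ (jointOn Finset.univ (A τ)) (fun ω => (jointOn Λ W ω, Q ω))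
        = L + condEntropy μ (jointOn Finset.univ (A τ))
            (fun ω => (jointOn (insert τ Λ) W ω, Q ω)) := by
    intro Λ τ hτ
    have c1 : condEntropy μ (fun ω => (W τ ω, jointOn Finset.univ (A τ) ω))
          (fun ω => (jointOn Λ W ω, Q ω))
        = condEntropy μ (W τ) (fun ω => (jointOn Finset.univ (A τ) ω, jointOn Λ W ω, Q ω))
          + condEntropy μ (jointOn Finset.univ (A τ)) (fun ω => (jointOn Λ W ω, Q ω)) :=
      PIRAux.condEntropy_chain (W τ) (jointOn Finset.univ (A τ))
        (fun ω => (jointOn Λ W ω, Q ω))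
    have c2 : condEntropy μ (fun ω => (jointOn Finset.univ (A τ) ω, W τ ω))
          (fun ω => (jointOn Λ W ω, Q ω))
        = condEntropy μ (jointOn Finset.univ (A τ)) (fun ω => (W τ ω, jointOn Λ W ω, Q ω))
          + condEntropy μ (W τ) (fun ω => (jointOn Λ W ω, Q ω)) :=
      PIRAux.condEntropy_chain (jointOn Finset.univ (A τ)) (W τ)
        (fun ω => (jointOn Λ W ω, Q ω))
    have e1 := hcorr τ Λ
    have e2 : condEntropy μ (fun ω => (W τ ω, jointOn Finset.univ (A τ) ω))
          (fun ω => (jointOn Λ W ω, Q ω))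
        = condEntropy μ (fun ω => (jointOn Finset.univ (A τ) ω, W τ ω))
          (fun ω => (jointOn Λ W ω, Q ω)) :=
      PIRAux.condEntropy_congr_left
        (fun ω ω' => by simp only [Prod.ext_iff]; tauto)
    have e3 := hrec Λ τ hτ
    have e4 : condEntropy μ (jointOn Finset.univ (A τ))
          (fun ω => (W τ ω, jointOn Λ W ω, Q ω))
        = condEntropy μ (jointOn Finset.univ (A τ))
          (fun ω => (jointOn (insert τ Λ) W ω, Q ω)) := by
      apply PIRAux.condEntropy_congr_right
      intro ω ω'
      have hJ := PIRAux.jointOn_insert_fiber W τ Λ ω ω'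
      simp only [Prod.ext_iff] at hJ ⊢
      tauto
    linarith [c1, c2, e1, e2, e3, e4]
  -- MDS symmetry step via Shearer's inequality
  have hP2 : ∀ (Λ : Finset (Fin M)) (τ τ' : Fin M),
      x * condEntropy μ (jointOn Finset.univ (A τ')) (fun ω => (jointOn Λ W ω, Q ω))
        ≤ condEntropy μ (jointOn Finset.univ (A τ)) (fun ω => (jointOn Λ W ω, Q ω)) := by
    intro Λ τ τ'
    have hsh := PIRAux.shearer hμ hμ1 hKN (A τ') (fun ω => (jointOn Λ W ω, Q ω))
    have h1 : (K : ℝ) * condEntropy μ (jointOn Finset.univ (A τ'))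
          (fun ω => (jointOn Λ W ω, Q ω))
        ≤ (N : ℝ) * condEntropy μ (jointOn Finset.univ (A τ))
          (fun ω => (jointOn Λ W ω, Q ω)) := by
      calc (K : ℝ) * condEntropy μ (jointOn Finset.univ (A τ'))
            (fun ω => (jointOn Λ W ω, Q ω))
          ≤ ∑ j : Fin N, condEntropy μ (jointOn (PIRAux.win hKN j) (A τ'))
              (fun ω => (jointOn Λ W ω, Q ω)) := hsh
        _ = ∑ j : Fin N, condEntropy μ (jointOn (PIRAux.win hKN j) (A τ))
              (fun ω => (jointOn Λ W ω, Q ω)) :=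
            Finset.sum_congr rfl fun j _ => hsym τ' τ Λ _ (PIRAux.card_win hKN j)
        _ ≤ ∑ _j : Fin N, condEntropy μ (jointOn Finset.univ (A τ))
              (fun ω => (jointOn Λ W ω, Q ω)) :=
            Finset.sum_le_sum fun j _ =>
              PIRAux.condEntropy_jointOn_mono hμ (A τ) (Finset.subset_univ _) _
        _ = (N : ℝ) * condEntropy μ (jointOn Finset.univ (A τ))
              (fun ω => (jointOn Λ W ω, Q ω)) := by
            rw [Finset.sum_const, Finset.card_univ, Fintype.card_fin, nsmul_eq_mul]
    rw [hx, div_mul_eq_mul_div, div_le_iff₀ hN0]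
    nlinarith [h1]
  -- main induction
  have main : ∀ k : ℕ, ∀ Λ : Finset (Fin M), Λ.card + k = M → ∀ τ : Fin M, τ ∉ Λ →
      L * ∑ i ∈ Finset.range k, x ^ i
        ≤ condEntropy μ (jointOn Finset.univ (A τ)) (fun ω => (jointOn Λ W ω, Q ω)) := by
    intro k
    induction k with
    | zero =>
      intro Λ hcard τ hτ
      exfalso
      have hΛ : Λ = Finset.univ :=
        Finset.eq_univ_of_card Λ (by rw [Fintype.card_fin]; omega)
      exact hτ (hΛ ▸ Finset.mem_univ τ)
    | succ k ih =>
      intro Λ hcard τ hτ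
      rw [hstep Λ τ hτ, geom_sum_succ]
      have hcard' : (insert τ Λ).card + k = M := by
        rw [Finset.card_insert_of_notMem hτ]; omega
      have hrest : x * (L * ∑ i ∈ Finset.range k, x ^ i)
          ≤ condEntropy μ (jointOn Finset.univ (A τ))
            (fun ω => (jointOn (insert τ Λ) W ω, Q ω)) := by
        rcases Nat.eq_zero_or_pos k with hk | hk
        · subst hk
          simp only [Finset.range_zero, Finset.sum_empty, mul_zero]
          exact PIRAux.condEntropy_nonneg hμ _ _
        · have hne : insert τ Λ ≠ Finset.univ := by
            intro h
            have hcc := congrArg Finset.card h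
            rw [Finset.card_univ, Fintype.card_fin] at hcc
            omega
          obtain ⟨τ', hτ'⟩ : ∃ τ', τ' ∉ insert τ Λ := by
            by_contra hcon
            push_neg at hcon
            exact hne (Finset.eq_univ_iff_forall.mpr hcon)
          calc x * (L * ∑ i ∈ Finset.range k, x ^ i)
              ≤ x * condEntropy μ (jointOn Finset.univ (A τ'))
                  (fun ω => (jointOn (insert τ Λ) W ω, Q ω)) :=
                mul_le_mul_of_nonneg_left (ih (insert τ Λ) hcard' τ' hτ') hx0
            _ ≤ _ := hP2 (insert τ Λ) τ τ'
      have hring : L * (x * ∑ i ∈ Finset.range k, x ^ i + 1)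
          = L + x * (L * ∑ i ∈ Finset.range k, x ^ i) := by ring
      rw [hring]
      linarith [hrest]
  -- assemble
  have hM0 : L * ∑ i ∈ Finset.range M, x ^ i
      ≤ condEntropy μ (jointOn Finset.univ (A θ))
        (fun ω => (jointOn (∅ : Finset (Fin M)) W ω, Q ω)) :=
    main M ∅ (by simp) θ (Finset.notMem_empty θ)
  have hup : condEntropy μ (jointOn Finset.univ (A θ))
        (fun ω => (jointOn (∅ : Finset (Fin M)) W ω, Q ω))
      ≤ ∑ i : Fin N, entropy μ (A θ i) := by
    have hch := PIRAux.condEntropy_jointOn_prefix hμ1 (A θ)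
      (fun ω => (jointOn (∅ : Finset (Fin M)) W ω, Q ω)) N le_rfl
    rw [PIRAux.pref_univ] at hch
    rw [hch]
    exact Finset.sum_le_sum fun i _ => PIRAux.condEntropy_le_entropy hμ hμ1 _ _
  have hG1 : (1 : ℝ) ≤ ∑ i ∈ Finset.range M, x ^ i := by
    have h0 : x ^ 0 ≤ ∑ i ∈ Finset.range M, x ^ i :=
      Finset.single_le_sum (f := fun i => x ^ i) (fun i _ => pow_nonneg hx0 i)
        (Finset.mem_range.mpr (by omega))
    simpa using h0
  constructor
  · exact le_trans hM0 hup
  · intro hLpos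
    have hG0 : (0 : ℝ) < ∑ i ∈ Finset.range M, x ^ i := lt_of_lt_of_le one_pos hG1
    have hS0 : (0 : ℝ) < ∑ i : Fin N, entropy μ (A θ i) :=
      lt_of_lt_of_le (mul_pos hLpos hG0) (le_trans hM0 hup)
    rw [← one_div, div_le_div_iff₀ hS0 hG0]
    nlinarith [le_trans hM0 hup]
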